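/- For all α ∈ (0,2) and all real 0 < b ≤ a: (2/π) · sin(πα/2) · (a b)^{α/2} · ∫_b^a (z² + (α/2) a²) · ((a − z)/(z − b))^{α/2} · z^{−1} dz = α a^{α+2} − (α/2) (a b)^{1+α/2} · ( (a/b + b/a)(1 + α/2) − α ). -/

import Mathlib

open Real

open MeasureTheory Set intervalIntegral

lemma betaReal (p q : ℝ) (hp : 0 < p) (hq : 0 < q) :
    ∫ t in (0:ℝ)..1, t ^ (p-1) * (1-t) ^ (q-1) =
      Real.Gamma p * Real.Gamma q / Real.Gamma (p+q) := by
  have hG : (0:ℝ) < Real.Gamma (p+q) := Real.Gamma_pos_of_pos (by linarith)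
  have key := Complex.Gamma_mul_Gamma_eq_betaIntegral
    (s := (p:ℂ)) (t := (q:ℂ)) (by simpa using hp) (by simpa using hq)
  have hbeta : Complex.betaIntegral p q =
      ((∫ t in (0:ℝ)..1, t ^ (p-1) * (1-t) ^ (q-1) : ℝ) : ℂ) := by
    rw [Complex.betaIntegral, ← intervalIntegral.integral_ofReal]
    apply intervalIntegral.integral_congr
    intro x hx
    rw [uIcc_of_le (by norm_num : (0:ℝ) ≤ 1)] at hx
    have e1 : ((x:ℂ)) ^ ((p:ℂ) - 1) = ((x ^ (p-1) : ℝ) : ℂ) := by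
      rw [Complex.ofReal_cpow hx.1]; push_cast; ring_nf
    have e2 : (1 - (x:ℂ)) ^ ((q:ℂ) - 1) = (((1-x) ^ (q-1) : ℝ) : ℂ) := by
      rw [Complex.ofReal_cpow (by linarith [hx.2] : (0:ℝ) ≤ 1 - x)]; push_cast; ring_nf
    simp only [e1, e2, ← Complex.ofReal_mul]
  rw [hbeta, ← Complex.ofReal_add, Complex.Gamma_ofReal, Complex.Gamma_ofReal,
    Complex.Gamma_ofReal, ← Complex.ofReal_mul, ← Complex.ofReal_mul] at key
  have h2 := Complex.ofReal_inj.mp key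
  field_simp
  linarith [h2]

lemma integrableOn_w_mul {r : ℝ} (hr0 : 0 < r) (hr1 : r < 1) {h : ℝ → ℝ} {C : ℝ}
    (hc : ContinuousOn h (Ioo 0 1)) (hC : ∀ t ∈ Ioo (0:ℝ) 1, |h t| ≤ C) :
    IntegrableOn (fun t => ((1-t)/t) ^ r * h t) (Ioo (0:ℝ) 1) := by
  have hC0 : 0 ≤ C := le_trans (abs_nonneg _) (hC (1/2) (by norm_num))
  have hdom : IntegrableOn (fun t : ℝ => C * t ^ (-r)) (Ioo (0:ℝ) 1) := by
    have := (intervalIntegrable_rpow' (a := 0) (b := 1)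
      (show (-1:ℝ) < -r by linarith)).1.mono_set Ioo_subset_Ioc_self
    exact this.const_mul C
  have hmeas : AEStronglyMeasurable (fun t => ((1-t)/t) ^ r * h t)
      (volume.restrict (Ioo (0:ℝ) 1)) := by
    apply ContinuousOn.aestronglyMeasurable _ measurableSet_Ioo
    exact (((continuousOn_const.sub continuousOn_id).div continuousOn_id
      (fun t ht => ne_of_gt ht.1)).rpow_const (fun t ht => Or.inr hr0.le)).mul hc
  refine hdom.integrable.mono hmeas ?_
  rw [ae_restrict_iff' measurableSet_Ioo]
  filter_upwards with t ht
  have h1 : (0:ℝ) < t := ht.1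
  have h2 : t < 1 := ht.2
  have hw0 : 0 ≤ ((1-t)/t) ^ r := Real.rpow_nonneg (div_nonneg (by linarith) h1.le) r
  have hwle : ((1-t)/t) ^ r ≤ t ^ (-r) := by
    have e : (1/t) ^ r = t ^ (-r) := by
      rw [Real.rpow_neg h1.le, one_div, Real.inv_rpow h1.le]
    rw [← e]
    exact Real.rpow_le_rpow (div_nonneg (by linarith) h1.le)
      ((div_le_div_iff_of_pos_right h1).mpr (by linarith)) hr0.le
  have htr : (0:ℝ) ≤ t ^ (-r) := Real.rpow_nonneg h1.le _
  have : ‖((1-t)/t) ^ r * h t‖ ≤ C * t ^ (-r) := by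
    rw [norm_mul, Real.norm_eq_abs, Real.norm_eq_abs, abs_of_nonneg hw0]
    calc ((1-t)/t) ^ r * |h t| ≤ t ^ (-r) * C :=
          mul_le_mul hwle (hC t ht) (abs_nonneg _) htr
      _ = C * t ^ (-r) := mul_comm _ _
  calc ‖((1-t)/t) ^ r * h t‖ ≤ C * t ^ (-r) := this
    _ = ‖C * t ^ (-r)‖ := by
        rw [Real.norm_eq_abs, abs_of_nonneg (mul_nonneg hC0 htr)]

lemma intW_aux {f : ℝ → ℝ} {p q : ℝ} (hp : 0 < p) (hq : 0 < q)
    (hf : ∀ t ∈ Ioo (0:ℝ) 1, f t = t ^ (p-1) * (1-t) ^ (q-1)) :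
    ∫ t in Ioo (0:ℝ) 1, f t = Real.Gamma p * Real.Gamma q / Real.Gamma (p+q) := by
  rw [← betaReal p q hp hq,
    intervalIntegral.integral_of_le (by norm_num : (0:ℝ) ≤ 1),
    MeasureTheory.integral_Ioc_eq_integral_Ioo]
  exact MeasureTheory.setIntegral_congr_fun measurableSet_Ioo hf

lemma w_eq {r : ℝ} {t : ℝ} (ht : t ∈ Ioo (0:ℝ) 1) :
    ((1-t)/t) ^ r = t ^ (-r) * (1-t) ^ r := by
  rw [Real.div_rpow (by linarith [ht.2]) ht.1.le, Real.rpow_neg ht.1.le, div_eq_mul_inv,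
    mul_comm]

lemma intW {r : ℝ} (hr0 : 0 < r) (hr1 : r < 1) :
    ∫ t in Ioo (0:ℝ) 1, ((1-t)/t) ^ r = Real.Gamma (1-r) * Real.Gamma (1+r) := by
  have := intW_aux (f := fun t => ((1-t)/t) ^ r) (p := 1-r) (q := 1+r)
    (by linarith) (by linarith) ?_
  · rw [this, show (1-r) + (1+r) = 2 by ring, Real.Gamma_two, div_one]
  · intro t ht
    rw [w_eq (r := r) ht]
    norm_num

lemma intTW {r : ℝ} (hr0 : 0 < r) (hr1 : r < 1) :
    ∫ t in Ioo (0:ℝ) 1, t * ((1-t)/t) ^ r = Real.Gamma (2-r) * Real.Gamma (1+r) / 2 := by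
  have h3 : Real.Gamma ((2-r) + (1+r)) = 2 := by
    rw [show (2-r) + (1+r) = (2:ℕ) + 1 by push_cast; ring, Real.Gamma_nat_eq_factorial]
    norm_num
  have := intW_aux (f := fun t => t * ((1-t)/t) ^ r) (p := 2-r) (q := 1+r)
    (by linarith) (by linarith) ?_
  · rw [this, h3]
  · intro t ht
    rw [w_eq (r := r) ht, show (2-r)-1 = 1 + (-r) by ring, Real.rpow_add ht.1,
      Real.rpow_one]
    norm_num
    ring

lemma mobius_subst {r l : ℝ} (hr0 : 0 < r) (hr1 : r < 1) (hl : -1 < l) :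
    ∫ t in Ioo (0:ℝ) 1, ((1-t)/t) ^ r / (1+l*t) ^ 2
      = (1+l) ^ (r-1) * ∫ u in Ioo (0:ℝ) 1, ((1-u)/u) ^ r := by
  have h1l : (0:ℝ) < 1 + l := by linarith
  have hD : ∀ u ∈ Ioo (0:ℝ) 1, 0 < 1 + l - l*u := by
    intro u hu; nlinarith [hu.1, hu.2]
  set ψ : ℝ → ℝ := fun u => u / (1 + l - l*u) with hψdef
  have hψat : ∀ u ∈ Ioo (0:ℝ) 1, HasDerivAt ψ ((1+l)/(1+l-l*u)^2) u := by
    intro u hu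
    have hDu := hD u hu
    have hden : HasDerivAt (fun u : ℝ => 1 + l - l*u) (-l) u := by
      simpa using ((hasDerivAt_id u).const_mul l).const_sub (1+l)
    have := (hasDerivAt_id u).div hden (ne_of_gt hDu)
    refine this.congr_deriv ?_
    simp only [id_eq]
    field_simp
    ring
  have hinj : InjOn ψ (Ioo 0 1) := by
    intro x hx y hy hxy
    have hDx := hD x hx; have hDy := hD y hy
    rw [hψdef] at hxy
    simp only at hxy
    rw [div_eq_div_iff (ne_of_gt hDx) (ne_of_gt hDy)] at hxy
    have h0 : (x - y) * (1 + l) = 0 := by linear_combination hxy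
    rcases mul_eq_zero.mp h0 with h | h
    · linarith
    · linarith
  have himg : ψ '' Ioo 0 1 = Ioo 0 1 := by
    ext t
    constructor
    · rintro ⟨u, hu, rfl⟩
      have hDu := hD u hu
      refine ⟨div_pos hu.1 hDu, ?_⟩
      rw [hψdef]; simp only
      rw [div_lt_one hDu]; nlinarith [hu.1, hu.2]
    · intro ht
      have hE : (0:ℝ) < 1 + l*t := by nlinarith [ht.1, ht.2]
      refine ⟨(1+l)*t/(1+l*t), ⟨div_pos (mul_pos h1l ht.1) hE, ?_⟩, ?_⟩
      · rw [div_lt_one hE]; nlinarith [ht.2]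
      · rw [hψdef]
        simp only
        rw [div_eq_iff, eq_comm]
        · have hE' : 1 + t * l ≠ 0 := by nlinarith
          field_simp
          ring
        · have : 1 + l - l * ((1+l)*t/(1+l*t)) = (1+l)/(1+l*t) := by
            field_simp; ring
          rw [this]
          positivity
  have key := integral_image_eq_integral_abs_deriv_smul measurableSet_Ioo
    (fun u hu => (hψat u hu).hasDerivWithinAt) hinj
    (fun t => ((1-t)/t) ^ r / (1+l*t) ^ 2)
  rw [himg] at key
  rw [key]
  rw [← MeasureTheory.integral_const_mul]
  apply MeasureTheory.setIntegral_congr_fun measurableSet_Ioo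
  intro u hu
  have hDu := hD u hu
  have hu0 := hu.1
  have hu1 := hu.2
  simp only [smul_eq_mul]
  have e1 : 1 - ψ u = (1+l)*(1-u) / (1+l-l*u) := by
    rw [hψdef]; simp only; rw [eq_div_iff (ne_of_gt hDu), sub_mul, div_mul_cancel₀ _ (ne_of_gt hDu)]; ring
  have e2 : 1 + l * ψ u = (1+l) / (1+l-l*u) := by
    rw [hψdef]; simp only; rw [eq_div_iff (ne_of_gt hDu), add_mul, mul_assoc, div_mul_cancel₀ _ (ne_of_gt hDu)]; ring
  have hu0' : u ≠ 0 := ne_of_gt hu0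
  have hD' : (1+l-l*u) ≠ 0 := ne_of_gt hDu
  have e3 : (1 - ψ u) / ψ u = (1+l) * ((1-u)/u) := by
    rw [e1, hψdef]
    simp only
    field_simp
    try ring
  rw [e3, e2]
  rw [Real.mul_rpow h1l.le (div_nonneg (by linarith) hu0.le)]
  rw [abs_of_pos (by positivity)]
  rw [div_pow, div_div_eq_mul_div, Real.rpow_sub h1l, Real.rpow_one]
  field_simp

noncomputable def Ffun (r l : ℝ) : ℝ := ∫ t in Ioo (0:ℝ) 1, ((1-t)/t) ^ r * (l/(1+l*t))

lemma cont_aux {x : ℝ} (hx : -1/4 ≤ x) : ∀ t ∈ Ioo (0:ℝ) 1, (3/4:ℝ) ≤ 1 + x*t := by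
  intro t ht
  nlinarith [ht.1, ht.2, mul_le_mul_of_nonneg_right hx ht.1.le]

lemma hasDerivAt_Ffun {r : ℝ} (hr0 : 0 < r) (hr1 : r < 1) {l : ℝ} (hl : 0 ≤ l) :
    HasDerivAt (Ffun r) ((1+l) ^ (r-1) * (Real.Gamma (1-r) * Real.Gamma (1+r))) l := by
  have hcontw : ContinuousOn (fun t : ℝ => ((1-t)/t) ^ r) (Ioo 0 1) :=
    ((continuousOn_const.sub continuousOn_id).div continuousOn_id
      (fun t ht => ne_of_gt ht.1)).rpow_const (fun t ht => Or.inr hr0.le)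
  have key := _root_.hasDerivAt_integral_of_dominated_loc_of_deriv_le
    (μ := volume.restrict (Ioo (0:ℝ) 1)) (x₀ := l) (s := Metric.ball l (1/4))
    (F := fun x t => ((1-t)/t) ^ r * (x/(1+x*t)))
    (F' := fun x t => ((1-t)/t) ^ r * (1/(1+x*t) ^ 2))
    (bound := fun t => ((1-t)/t) ^ r * 2)
    (Metric.ball_mem_nhds l (by norm_num)) ?meas ?int ?meas' ?bdd ?bint ?diff
  case meas =>
    filter_upwards [eventually_gt_nhds (show (-1/4:ℝ) < l by linarith)] with x hx
    apply ContinuousOn.aestronglyMeasurable _ measurableSet_Ioo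
    exact hcontw.mul (continuousOn_const.div
      (continuousOn_const.add (continuousOn_const.mul continuousOn_id))
      (fun t ht => by have := cont_aux hx.le t ht; intro h; linarith))
  case int =>
    apply integrableOn_w_mul hr0 hr1 (C := l)
    · exact continuousOn_const.div
        (continuousOn_const.add (continuousOn_const.mul continuousOn_id))
        (fun t ht => by have := cont_aux (x := l) (by linarith) t ht; intro h; linarith)
    · intro t ht
      have h1 : (1:ℝ) ≤ 1 + l*t := by nlinarith [ht.1]
      rw [abs_of_nonneg (div_nonneg hl (by linarith))]
      calc l/(1+l*t) ≤ l/1 := div_le_div_of_nonneg_left hl (by norm_num) h1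
        _ = l := div_one l
  case meas' =>
    apply ContinuousOn.aestronglyMeasurable _ measurableSet_Ioo
    exact hcontw.mul (continuousOn_const.div
      ((continuousOn_const.add (continuousOn_const.mul continuousOn_id)).pow 2)
      (fun t ht => by
        have := cont_aux (x := l) (by linarith) t ht
        exact ne_of_gt (by nlinarith)))
  case bdd =>
    rw [ae_restrict_iff' measurableSet_Ioo]
    filter_upwards with t ht
    intro x hx
    have hx4 : -1/4 ≤ x := by
      have := abs_lt.mp (mem_ball_iff_norm.mp hx)
      linarith [this.1]
    have h34 := cont_aux hx4 t ht
    have hw0 : 0 ≤ ((1-t)/t) ^ r :=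
      Real.rpow_nonneg (div_nonneg (by linarith [ht.2]) ht.1.le) r
    have hfrac : 1/(1+x*t) ^ 2 ≤ 2 := by
      rw [div_le_iff₀ (by nlinarith)]
      nlinarith
    rw [Real.norm_eq_abs, abs_of_nonneg (by positivity)]
    exact mul_le_mul_of_nonneg_left hfrac hw0
  case bint =>
    exact integrableOn_w_mul hr0 hr1 (C := 2) continuousOn_const (fun t ht => by norm_num)
  case diff =>
    rw [ae_restrict_iff' measurableSet_Ioo]
    filter_upwards with t ht
    intro x hx
    have hx4 : -1/4 ≤ x := by
      have := abs_lt.mp (mem_ball_iff_norm.mp hx)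
      linarith [this.1]
    have h34 := cont_aux hx4 t ht
    have hden : HasDerivAt (fun x : ℝ => 1 + x*t) t x := by
      simpa using ((hasDerivAt_id x).mul_const t).const_add 1
    have hne : (1 + x*t) ≠ 0 := by intro h; linarith
    have hd := ((hasDerivAt_id x).div hden hne).const_mul (((1-t)/t) ^ r)
    simpa only [Pi.div_apply, id_eq, one_mul, add_sub_cancel_right] using hd
  have e : (∫ t in Ioo (0:ℝ) 1, ((1-t)/t) ^ r * (1/(1+l*t) ^ 2))
      = (1+l) ^ (r-1) * (Real.Gamma (1-r) * Real.Gamma (1+r)) := by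
    rw [← intW hr0 hr1, ← mobius_subst hr0 hr1 (by linarith : (-1:ℝ) < l)]
    apply MeasureTheory.setIntegral_congr_fun measurableSet_Ioo
    intro t ht
    simp only
    rw [mul_one_div]
  unfold Ffun
  rw [← e]
  exact key.2

lemma Ffun_eq {r : ℝ} (hr0 : 0 < r) (hr1 : r < 1) {l : ℝ} (hl : 0 ≤ l) :
    Ffun r l = Real.Gamma (1-r) * Real.Gamma (1+r) / r * ((1+l) ^ r - 1) := by
  set K := Real.Gamma (1-r) * Real.Gamma (1+r) with hK
  set G : ℝ → ℝ := fun x => K / r * ((1+x) ^ r - 1) with hG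
  have hGd : ∀ x : ℝ, 0 ≤ x → HasDerivAt G ((1+x) ^ (r-1) * K) x := by
    intro x hx
    have h1x : (0:ℝ) < 1 + x := by linarith
    have hin : HasDerivAt (fun x : ℝ => (1+x) ^ r) (r * (1+x) ^ (r-1) * 1) x := by
      exact (Real.hasDerivAt_rpow_const (Or.inl (ne_of_gt h1x))).comp x
        ((hasDerivAt_id x).const_add 1)
    have := (hin.sub_const 1).const_mul (K / r)
    refine this.congr_deriv ?_
    field_simp
  have hF0 : Ffun r 0 = G 0 := by
    simp [Ffun, hG]
  rcases eq_or_lt_of_le hl with h | h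
  · rw [← h, hF0, hG]
  · have := eq_of_has_deriv_right_eq (f := Ffun r) (g := G)
      (f' := fun x => (1+x) ^ (r-1) * K) (a := 0) (b := l)
      (fun x hx => ((hasDerivAt_Ffun hr0 hr1 hx.1).hasDerivWithinAt))
      (fun x hx => ((hGd x hx.1).hasDerivWithinAt))
      (fun x hx => (hasDerivAt_Ffun hr0 hr1 hx.1).continuousAt.continuousWithinAt)
      (fun x hx => (hGd x hx.1).continuousAt.continuousWithinAt)
      hF0
    exact this l ⟨hl, le_refl l⟩

lemma main_integral {r a b : ℝ} (hr0 : 0 < r) (hr1 : r < 1) (hb : 0 < b) (hba : b < a) :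
    (∫ z in b..a, (z^2 + r*a^2) * ((a-z)/(z-b))^r / z)
      = Real.Gamma (1-r) * Real.Gamma (1+r) *
        ((a-b)*b + (a-b)^2*(1-r)/2 + a^2*((a/b)^r - 1)) := by
  set K := Real.Gamma (1-r) * Real.Gamma (1+r) with hKdef
  set d : ℝ := a - b with hd
  have hd0 : 0 < d := by rw [hd]; linarith
  set l : ℝ := d/b with hl
  have hl0 : 0 < l := div_pos hd0 hb
  have h1l : 1 + l = a/b := by rw [hl, hd]; field_simp; ring
  rw [intervalIntegral.integral_of_le hba.le, MeasureTheory.integral_Ioc_eq_integral_Ioo]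
  -- affine substitution
  set φ : ℝ → ℝ := fun t => b + d*t with hφ
  have hφat : ∀ t : ℝ, HasDerivAt φ d t := by
    intro t
    simpa [hφ] using ((hasDerivAt_id t).const_mul d).const_add b
  have hinj : InjOn φ (Ioo 0 1) := by
    intro x hx y hy hxy
    rw [hφ] at hxy
    simp only [add_right_inj] at hxy
    exact mul_left_cancel₀ (ne_of_gt hd0) hxy
  have himg : φ '' Ioo 0 1 = Ioo b a := by
    ext z
    constructor
    · rintro ⟨u, hu, rfl⟩
      constructor
      · simp only [hφ]; nlinarith [hu.1]
      · simp only [hφ]; nlinarith [hu.2]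
    · intro hz
      refine ⟨(z-b)/d, ⟨div_pos (by linarith [hz.1]) hd0, ?_⟩, ?_⟩
      · rw [div_lt_one hd0]; simp only [hd]; linarith [hz.2]
      · simp only [hφ]; field_simp; ring
  have key := integral_image_eq_integral_abs_deriv_smul measurableSet_Ioo
    (fun t _ => (hφat t).hasDerivWithinAt) hinj
    (fun z => (z^2 + r*a^2) * ((a-z)/(z-b))^r / z)
  rw [himg] at key
  rw [key]
  -- pointwise rewrite
  have hcong : ∀ t ∈ Ioo (0:ℝ) 1,
      |d| • ((φ t ^ 2 + r*a^2) * ((a - φ t)/(φ t - b))^r / φ t)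
        = ((1-t)/t)^r * (d*b + d^2*t) + r*a^2 * (((1-t)/t)^r * (l/(1+l*t))) := by
    intro t ht
    have ht0 := ht.1
    have ht1 := ht.2
    have hφt : 0 < φ t := by simp only [hφ]; nlinarith
    have hφtne : φ t ≠ 0 := ne_of_gt hφt
    have e1 : (a - φ t)/(φ t - b) = (1-t)/t := by
      simp only [hφ, hd]
      rw [div_eq_div_iff (by nlinarith) (by nlinarith)]
      ring
    have e2 : 1 + l*t = φ t / b := by
      simp only [hφ, hl]
      field_simp
    have e3 : l/(1+l*t) = d / φ t := by
      rw [e2, hl]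
      rw [div_div_div_eq, div_eq_div_iff (by positivity) (ne_of_gt hφt)]
      ring
    rw [smul_eq_mul, abs_of_pos hd0, e1, e3]
    simp only [hφ]
    field_simp
  rw [MeasureTheory.setIntegral_congr_fun measurableSet_Ioo hcong]
  -- integrability facts
  have intw : IntegrableOn (fun t => ((1-t)/t)^r) (Ioo (0:ℝ) 1) := by
    have := integrableOn_w_mul hr0 hr1 (h := fun _ => (1:ℝ)) (C := 1)
      continuousOn_const (fun t _ => by norm_num)
    simpa using this
  have inttw : IntegrableOn (fun t => ((1-t)/t)^r * t) (Ioo (0:ℝ) 1) :=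
    integrableOn_w_mul hr0 hr1 (h := fun t => t) (C := 1)
      continuousOn_id (fun t ht => by rw [abs_of_pos ht.1]; exact ht.2.le)
  have int1 : IntegrableOn (fun t => ((1-t)/t)^r * (d*b + d^2*t)) (Ioo (0:ℝ) 1) :=
    integrableOn_w_mul hr0 hr1 (C := d*b + d^2)
      (continuousOn_const.add (continuousOn_const.mul continuousOn_id))
      (fun t ht => by rw [abs_of_pos (by nlinarith [ht.1])]; nlinarith [ht.2])
  have int2 : IntegrableOn (fun t => ((1-t)/t)^r * (l/(1+l*t))) (Ioo (0:ℝ) 1) :=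
    integrableOn_w_mul hr0 hr1 (C := l)
      (continuousOn_const.div
        (continuousOn_const.add (continuousOn_const.mul continuousOn_id))
        (fun t ht => by nlinarith [ht.1, ht.2, mul_pos hl0 ht.1]))
      (fun t ht => by
        have h1 : (1:ℝ) ≤ 1 + l*t := by nlinarith [ht.1]
        rw [abs_of_nonneg (div_nonneg hl0.le (by linarith))]
        calc l/(1+l*t) ≤ l/1 := div_le_div_of_nonneg_left hl0.le (by norm_num) h1
          _ = l := div_one l)
  rw [MeasureTheory.integral_add int1 (int2.const_mul (r*a^2))]
  -- second piece = r*a^2 * Ffun r l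
  have hF : ∫ t in Ioo (0:ℝ) 1, r*a^2 * (((1-t)/t)^r * (l/(1+l*t)))
      = a^2 * K * ((a/b)^r - 1) := by
    rw [MeasureTheory.integral_const_mul]
    have : (∫ t in Ioo (0:ℝ) 1, ((1-t)/t)^r * (l/(1+l*t))) = Ffun r l := rfl
    rw [this, Ffun_eq hr0 hr1 hl0.le, h1l, hKdef]
    field_simp
  rw [hF]
  -- first piece
  have h2r : Real.Gamma (2-r) = (1-r) * Real.Gamma (1-r) := by
    rw [show (2-r) = (1-r)+1 by ring, Real.Gamma_add_one (ne_of_gt (by linarith))]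
  have hsplit : ∀ t ∈ Ioo (0:ℝ) 1,
      ((1-t)/t)^r * (d*b + d^2*t) = d*b * ((1-t)/t)^r + d^2 * (((1-t)/t)^r * t) := by
    intro t _; ring
  have h1 : ∫ t in Ioo (0:ℝ) 1, ((1-t)/t)^r * (d*b + d^2*t)
      = d*b*K + d^2*((1-r)*K/2) := by
    rw [MeasureTheory.setIntegral_congr_fun measurableSet_Ioo hsplit,
      MeasureTheory.integral_add (intw.const_mul (d*b)) (inttw.const_mul (d^2)),
      MeasureTheory.integral_const_mul, MeasureTheory.integral_const_mul]
    have e : (∫ t in Ioo (0:ℝ) 1, ((1-t)/t)^r * t)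
        = ∫ t in Ioo (0:ℝ) 1, t * ((1-t)/t)^r := by
      apply MeasureTheory.setIntegral_congr_fun measurableSet_Ioo
      intro t _; simp only; ring
    rw [intW hr0 hr1, e, intTW hr0 hr1, h2r, hKdef]
    ring
  rw [h1]
  ring

/-- the definite integral identity, for `α ∈ (0,2)` and `0 < b ≤ a`,
`(2/π) sin(πα/2) (ab)^{α/2} ∫_b^a (z² + (α/2)a²) ((a−z)/(z−b))^{α/2} z^{−1} dz
  = α a^{α+2} − (α/2)(ab)^{1+α/2} ((a/b + b/a)(1+α/2) − α)`. -/
theorem stmt11 (α a b : ℝ) (hα1 : 0 < α) (hα2 : α < 2) (hb : 0 < b) (hba : b ≤ a) :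
    (2 / π) * Real.sin (π * α / 2) * (a * b) ^ (α / 2) *
        ∫ z in b..a, (z ^ 2 + α / 2 * a ^ 2) * ((a - z) / (z - b)) ^ (α / 2) / z =
      α * a ^ (α + 2) -
        α / 2 * (a * b) ^ (1 + α / 2) * ((a / b + b / a) * (1 + α / 2) - α) := by
  have ha : 0 < a := lt_of_lt_of_le hb hba
  set r : ℝ := α / 2 with hr
  have hr0 : 0 < r := by rw [hr]; linarith
  have hr1 : r < 1 := by rw [hr]; linarith
  have hα2r : α = 2 * r := by rw [hr]; ring
  have hsin : Real.sin (π * α / 2) = Real.sin (π * r) := by rw [hr]; ring_nf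
  have hsinpos : 0 < Real.sin (π * r) :=
    Real.sin_pos_of_pos_of_lt_pi (by positivity)
      (by nlinarith [Real.pi_pos])
  have hpow2 : ∀ x : ℝ, 0 < x → x ^ ((2:ℝ)) = x ^ 2 := by
    intro x hx
    rw [show ((2:ℝ)) = ((2:ℕ):ℝ) by norm_num, Real.rpow_natCast]
  have h2r : a ^ (2*r) = (a*b) ^ r * (a/b) ^ r := by
    rw [← Real.mul_rpow (by positivity) (by positivity),
      show a*b*(a/b) = a^2 by field_simp,
      ← hpow2 a ha, ← Real.rpow_mul ha.le]
  have hsum : a ^ (2*r+2) = a ^ (2*r) * a ^ 2 := by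
    rw [Real.rpow_add ha, hpow2 a ha]
  have hab1 : (a*b) ^ (1+r) = (a*b) * (a*b) ^ r := by
    rw [Real.rpow_add (by positivity), Real.rpow_one]
  rcases eq_or_lt_of_le hba with heq | hlt
  · subst heq
    rw [intervalIntegral.integral_same, mul_zero]
    have e : (b*b) ^ (1+r) = b ^ (2*r+2) := by
      rw [show b*b = b^2 by ring, ← hpow2 b hb, ← Real.rpow_mul hb.le,
        show 2*(1+r) = 2*r+2 by ring]
    rw [e, div_self (ne_of_gt hb), hα2r, hsum]
    ring
  · rw [main_integral hr0 hr1 hb hlt, hsin]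
    have hK : (2/π) * Real.sin (π*r) * (Real.Gamma (1-r) * Real.Gamma (1+r)) = α := by
      rw [show (1+r) = r+1 by ring, Real.Gamma_add_one hr0.ne',
        show Real.Gamma (1-r) * (r * Real.Gamma r) = r * (Real.Gamma r * Real.Gamma (1-r)) by ring,
        Real.Gamma_mul_Gamma_one_sub, hα2r]
      field_simp
    rw [show (2/π) * Real.sin (π*r) * (a*b) ^ r *
        (Real.Gamma (1-r) * Real.Gamma (1+r) *
          ((a-b)*b + (a-b)^2*(1-r)/2 + a^2*((a/b)^r - 1)))
      = ((2/π) * Real.sin (π*r) * (Real.Gamma (1-r) * Real.Gamma (1+r))) *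
          ((a*b) ^ r * ((a-b)*b + (a-b)^2*(1-r)/2 + a^2*((a/b)^r - 1))) by ring, hK]
    rw [hα2r, hsum, h2r, hab1]
    field_simp
    ring
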